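/- Let A be a 2×2 integer matrix with determinant 1 and trace > 2, and let 𝒳, 𝒴 ⊆ 𝕋² be disjoint nonempty finite f_A-invariant sets. If every positive 𝒳-rectangle contains a point of the lift 𝒴̃, then there exists a negative 𝒴-rectangle disjoint from the lift 𝒳̃. -/

import Mathlib

/- Common setup: following the paper, we identify each subset of the torus
`𝕋² = ℝ²/ℤ²` with its (`ℤ²`-saturated) lift to `ℝ²`. -/

open Matrix Set
open scoped Pointwise

namespace Paper

/-- Points of the plane ℝ². -/
abbrev V : Type := Fin 2 → ℝ

/-- The integer lattice ℤ² ⊆ ℝ². -/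
def lattice : Set V := Set.range fun m : Fin 2 → ℤ => fun i => (m i : ℝ)

/-- The linear action of an integer matrix on ℝ². -/
def actR (A : Matrix (Fin 2) (Fin 2) ℤ) (v : V) : V :=
  (A.map (Int.cast : ℤ → ℝ)).mulVec v

/-- `E ⊆ ℝ²` is the lift of a finite subset of the torus. -/
def IsTorusFinite (E : Set V) : Prop := ∃ F : Set V, F.Finite ∧ E = F + lattice

/-- `E` is the lift of an `f_A`-invariant subset of the torus. -/
def IsInvariant (A : Matrix (Fin 2) (Fin 2) ℤ) (E : Set V) : Prop := actR A '' E = E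

/-- `E` is the lift of a periodic orbit of `f_A`. -/
def IsPeriodicOrbit (A : Matrix (Fin 2) (Fin 2) ℤ) (E : Set V) : Prop :=
  ∃ x : V, ∃ p : ℕ, 0 < p ∧ (actR A)^[p] x - x ∈ lattice ∧
    E = {v | ∃ i : ℕ, v - (actR A)^[i] x ∈ lattice}

/-- A rectangle `R(p; s, u)`, recorded via its basepoint `p` and its side
lengths `s, u > 0` (in the directions of the fixed eigenvectors `v^s, v^u`). -/
structure Rect where
  p : V
  s : ℝ
  u : ℝ
  s_pos : 0 < s
  u_pos : 0 < u

namespace Rect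

/-- The set of points of the rectangle `R(p;s,u)`. -/
def carrier (vs vu : V) (R : Rect) : Set V :=
  {q | ∃ a b : ℝ, 0 ≤ a ∧ a ≤ R.s ∧ 0 ≤ b ∧ b ≤ R.u ∧ q = R.p + a • vs + b • vu}

/-- Endpoint of the increasing diagonal (whose origin is `R.p`). -/
def incEnd (vs vu : V) (R : Rect) : V := R.p + R.s • vs + R.u • vu

/-- Origin of the decreasing diagonal. -/
def decOrigin (vs : V) (R : Rect) : V := R.p + R.s • vs

/-- Endpoint of the decreasing diagonal. -/
def decEnd (vu : V) (R : Rect) : V := R.p + R.u • vu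

/-- `R` is a positive `E`-rectangle. -/
def IsPos (vs vu : V) (E : Set V) (R : Rect) : Prop :=
  R.p ∈ E ∧ R.incEnd vs vu ∈ E

/-- `R` is a negative `E`-rectangle. -/
def IsNeg (vs vu : V) (E : Set V) (R : Rect) : Prop :=
  R.decOrigin vs ∈ E ∧ R.decEnd vu ∈ E

/-- `R` is a primitive positive `E`-rectangle. -/
def IsPrimPos (vs vu : V) (E : Set V) (R : Rect) : Prop :=
  R.IsPos vs vu E ∧ R.carrier vs vu ∩ E = {R.p, R.incEnd vs vu}

/-- `R` is a primitive negative `E`-rectangle. -/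
def IsPrimNeg (vs vu : V) (E : Set V) (R : Rect) : Prop :=
  R.IsNeg vs vu E ∧ R.carrier vs vu ∩ E = {R.decOrigin vs, R.decEnd vu}

/-- Bottom stable side of a rectangle. -/
def botSide (vs : V) (R : Rect) : Set V :=
  {q | ∃ a : ℝ, 0 ≤ a ∧ a ≤ R.s ∧ q = R.p + a • vs}

/-- Top stable side of a rectangle. -/
def topSide (vs vu : V) (R : Rect) : Set V :=
  {q | ∃ a : ℝ, 0 ≤ a ∧ a ≤ R.s ∧ q = R.p + a • vs + R.u • vu}

/-- Left unstable side of a rectangle. -/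
def leftSide (vu : V) (R : Rect) : Set V :=
  {q | ∃ b : ℝ, 0 ≤ b ∧ b ≤ R.u ∧ q = R.p + b • vu}

/-- Interior of a rectangle. -/
def interior (vs vu : V) (R : Rect) : Set V :=
  {q | ∃ a b : ℝ, 0 < a ∧ a < R.s ∧ 0 < b ∧ b < R.u ∧ q = R.p + a • vs + b • vu}

end Rect

/-- The (closed) quadrant `C₊₊(x)`. -/
def quadPP (vs vu x : V) : Set V :=
  {q | ∃ a b : ℝ, 0 ≤ a ∧ 0 ≤ b ∧ q = x + a • vs + b • vu}

/-- `D` is a right horizontal subrectangle of `R`. -/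
def IsRightHorizSub (vs : V) (D R : Rect) : Prop :=
  D.s ≤ R.s ∧ D.u = R.u ∧ D.p = R.p + (R.s - D.s) • vs

/-- A positive `X`-string with origin `x`: a sequence of positive `X`-rectangles,
the first one having `x` as origin of its increasing diagonal, consecutive ones
meeting exactly at one point which is the endpoint of the increasing diagonal of
the former and the origin of the increasing diagonal of the latter. -/
def IsPosString (vs vu : V) (X : Set V) (x : V) (R : ℕ → Rect) : Prop :=
  (∀ i, (R i).IsPos vs vu X) ∧ (R 0).p = x ∧
    ∀ i, (R i).carrier vs vu ∩ (R (i + 1)).carrier vs vu = {(R i).incEnd vs vu} ∧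
      (R (i + 1)).p = (R i).incEnd vs vu

/-- A positive `X`-staircase with origin `x`. -/
def IsPosStaircase (vs vu : V) (X : Set V) (x : V) (R : ℕ → Rect) : Prop :=
  (∀ i, (R i).carrier vs vu ⊆ quadPP vs vu x) ∧
    ∃ Del : ℕ → Rect, IsPosString vs vu X x Del ∧ R 0 = Del 0 ∧
      (∀ i, 1 ≤ i → IsRightHorizSub vs (Del i) (R i)) ∧
      (∀ i, (R i).topSide vs vu ⊆ (R (i + 1)).botSide vs) ∧
      ∃ C : ℝ, ∀ i, (Del (i + 1)).s / (Del i).s ≤ C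

/-- Stable side lengths of the primitive positive `(X, x)`-rectangles. -/
def baseLengths (vs vu : V) (X : Set V) (x : V) : Set ℝ :=
  {s | ∃ R : Rect, R.IsPrimPos vs vu X ∧ R.p = x ∧ R.s = s}

/-- The Euclidean norm of a point of ℝ². -/
noncomputable def euclNorm (v : V) : ℝ := Real.sqrt ((v 0) ^ 2 + (v 1) ^ 2)

/-- `Y` is the lift of an `ε`-dense subset of the torus, for the metric on the
torus induced by the Euclidean metric of ℝ². -/
def EDense (ε : ℝ) (Y : Set V) : Prop := ∀ v : V, ∃ y ∈ Y, euclNorm (v - y) ≤ ε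

/-- The lift of `{(0,1/2), (1/2,0), (1/2,1/2)}`, i.e. the set
`{(0,1/2), (1/2,0), (1/2,1/2)} + ℤ²`. -/
def halfPoints : Set V :=
  {v : V | ∃ w ∈ ({![0, 1/2], ![1/2, 0], ![1/2, 1/2]} : Set V), v - w ∈ lattice}

/-- The lift of the point `(1/2,1/2)` of the torus, i.e. `(1/2,1/2) + ℤ²`. -/
def halfCenter : Set V := {v : V | v - ![1/2, 1/2] ∈ lattice}

private lemma lattice_add {m n : V} (hm : m ∈ lattice) (hn : n ∈ lattice) :
    m + n ∈ lattice := by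
  obtain ⟨a, rfl⟩ := hm
  obtain ⟨b, rfl⟩ := hn
  exact ⟨a + b, by funext i; simp⟩

private lemma lattice_neg {m : V} (hm : m ∈ lattice) : -m ∈ lattice := by
  obtain ⟨a, rfl⟩ := hm
  exact ⟨-a, by funext i; simp⟩

private lemma lattice_sub {m n : V} (hm : m ∈ lattice) (hn : n ∈ lattice) :
    m - n ∈ lattice := by
  rw [sub_eq_add_neg]; exact lattice_add hm (lattice_neg hn)

private lemma lattice_actR (M : Matrix (Fin 2) (Fin 2) ℤ) {m : V} (hm : m ∈ lattice) :
    actR M m ∈ lattice := by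
  obtain ⟨a, rfl⟩ := hm
  refine ⟨M.mulVec a, ?_⟩
  funext i
  simp [actR, Matrix.mulVec, dotProduct, Fin.sum_univ_two, Matrix.map_apply]

private lemma actR_add (M : Matrix (Fin 2) (Fin 2) ℤ) (v w : V) :
    actR M (v + w) = actR M v + actR M w := Matrix.mulVec_add _ _ _

private lemma actR_sub (M : Matrix (Fin 2) (Fin 2) ℤ) (v w : V) :
    actR M (v - w) = actR M v - actR M w := Matrix.mulVec_sub _ _ _

private lemma actR_smul (M : Matrix (Fin 2) (Fin 2) ℤ) (c : ℝ) (v : V) :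
    actR M (c • v) = c • actR M v := Matrix.mulVec_smul _ _ _

private lemma map_mul_int (M N : Matrix (Fin 2) (Fin 2) ℤ) :
    (M * N).map (Int.cast : ℤ → ℝ) = M.map Int.cast * N.map Int.cast := by
  ext i j
  simp [Matrix.map_apply, Matrix.mul_apply, Fin.sum_univ_two]

private lemma actR_comp (M N : Matrix (Fin 2) (Fin 2) ℤ) (v : V) :
    actR M (actR N v) = actR (M * N) v := by
  show (M.map _).mulVec ((N.map _).mulVec v) = ((M * N).map _).mulVec v
  rw [Matrix.mulVec_mulVec, map_mul_int]

private lemma actR_one (v : V) : actR 1 v = v := by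
  have h1 : (1 : Matrix (Fin 2) (Fin 2) ℤ).map (Int.cast : ℤ → ℝ) = 1 := by
    ext i j
    simp [Matrix.map_apply, Matrix.one_apply, apply_ite (Int.cast : ℤ → ℝ)]
  show ((1 : Matrix (Fin 2) (Fin 2) ℤ).map _).mulVec v = v
  rw [h1, Matrix.one_mulVec]

private lemma iter_coord {f : V → V} {g : V →ₗ[ℝ] ℝ} {c : ℝ} (h : ∀ v, g (f v) = c * g v)
    (n : ℕ) (v : V) : g (f^[n] v) = c ^ n * g v := by
  induction n with
  | zero => simp
  | succ n ih => rw [Function.iterate_succ_apply', h, ih, pow_succ]; ring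

private lemma iter_mem {f : V → V} {S : Set V} (h : ∀ x ∈ S, f x ∈ S) (n : ℕ) {x : V}
    (hx : x ∈ S) : f^[n] x ∈ S := by
  induction n with
  | zero => simpa
  | succ n ih => rw [Function.iterate_succ_apply']; exact h _ ih

private lemma iter_sub {f : V → V} (h : ∀ v w, f (v - w) = f v - f w) (n : ℕ) (v w : V) :
    f^[n] (v - w) = f^[n] v - f^[n] w := by
  induction n with
  | zero => simp
  | succ n ih => rw [Function.iterate_succ_apply', Function.iterate_succ_apply',
      Function.iterate_succ_apply', ih, h]

private lemma finite_inter {F : Set V} (hF : F.Finite) (R : ℝ) :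
    ((F + lattice) ∩ {v : V | |v 0| ≤ R ∧ |v 1| ≤ R}).Finite := by
  obtain ⟨C, hC⟩ : ∃ C : ℝ, ∀ f ∈ F, |f 0| ≤ C ∧ |f 1| ≤ C := by
    obtain ⟨C, hC⟩ := (hF.image (fun f => max |f 0| |f 1|)).bddAbove
    refine ⟨C, fun f hf => ?_⟩
    have h1 := hC (Set.mem_image_of_mem _ hf)
    exact ⟨(le_max_left _ _).trans h1, (le_max_right _ _).trans h1⟩
  set N : ℤ := ⌈R + C⌉ with hN
  have hfin2 : ({m : Fin 2 → ℤ | ∀ i, m i ∈ Set.Icc (-N) N}).Finite := by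
    have he : {m : Fin 2 → ℤ | ∀ i, m i ∈ Set.Icc (-N) N}
        = Set.pi Set.univ (fun _ => Set.Icc (-N) N) := by
      ext m; simp [Set.mem_pi, Pi.le_def, forall_and]
    rw [he]; exact Set.Finite.pi (fun _ => Set.finite_Icc _ _)
  have hsub : (F + lattice) ∩ {v : V | |v 0| ≤ R ∧ |v 1| ≤ R} ⊆
      F + ((fun m : Fin 2 → ℤ => ((fun i => (m i : ℝ)) : V)) ''
        {m : Fin 2 → ℤ | ∀ i, m i ∈ Set.Icc (-N) N}) := by
    rintro v ⟨hv, hv0, hv1⟩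
    rw [Set.mem_add] at hv
    obtain ⟨f, hf, l, hl, hfl⟩ := hv
    obtain ⟨a, rfl⟩ := hl
    rw [Set.mem_add]
    refine ⟨f, hf, _, ⟨a, fun i => ?_, rfl⟩, hfl⟩
    obtain ⟨hfb0, hfb1⟩ := hC f hf
    have hai : |(a i : ℝ)| ≤ R + C := by
      have hv' : (a i : ℝ) = v i - f i := by
        rw [← hfl]; simp
      rw [hv']
      have htri : |v i - f i| ≤ |v i| + |f i| := by
        rw [sub_eq_add_neg]
        exact (abs_add_le _ _).trans (by rw [abs_neg])
      fin_cases i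
      · exact htri.trans (add_le_add hv0 hfb0)
      · exact htri.trans (add_le_add hv1 hfb1)
    have hRCN : (R + C : ℝ) ≤ (N : ℝ) := Int.le_ceil _
    rw [Set.mem_Icc]
    constructor
    · have : -(N : ℝ) ≤ (a i : ℝ) := by
        have := (abs_le.1 hai).1; linarith
      exact_mod_cast this
    · have : (a i : ℝ) ≤ (N : ℝ) := (le_abs_self _).trans (hai.trans hRCN)
      exact_mod_cast this
  exact (hF.add (hfin2.image _)).subset hsub

private lemma exists_coords {vs vu : V} (hli : LinearIndependent ℝ ![vs, vu]) :
    ∃ al be : V →ₗ[ℝ] ℝ, (∀ v, v = al v • vs + be v • vu) ∧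
      al vs = 1 ∧ al vu = 0 ∧ be vs = 0 ∧ be vu = 1 := by
  have hcard : Fintype.card (Fin 2) = Module.finrank ℝ V := by
    rw [Module.finrank_fin_fun ℝ, Fintype.card_fin]
  set B := basisOfLinearIndependentOfCardEqFinrank hli hcard with hBdef
  have hB := coe_basisOfLinearIndependentOfCardEqFinrank hli hcard
  have hB0 : B 0 = vs := by
    rw [hBdef, show ⇑(basisOfLinearIndependentOfCardEqFinrank hli hcard) = ![vs, vu] from hB]
    simp
  have hB1 : B 1 = vu := by
    rw [hBdef, show ⇑(basisOfLinearIndependentOfCardEqFinrank hli hcard) = ![vs, vu] from hB]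
    simp
  refine ⟨B.coord 0, B.coord 1, ?_, ?_, ?_, ?_, ?_⟩
  · intro v
    have h := B.sum_repr v
    rw [Fin.sum_univ_two, hB0, hB1] at h
    simpa [Module.Basis.coord_apply] using h.symm
  · rw [Module.Basis.coord_apply, ← hB0, Module.Basis.repr_self]; simp
  · rw [Module.Basis.coord_apply, ← hB1, Module.Basis.repr_self]; simp
  · rw [Module.Basis.coord_apply, ← hB0, Module.Basis.repr_self]; simp
  · rw [Module.Basis.coord_apply, ← hB1, Module.Basis.repr_self]; simp

private lemma eigen_indep {A : Matrix (Fin 2) (Fin 2) ℤ} {lam : ℝ} (hlam : 1 < lam)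
    {vs vu : V} (hvs : vs ≠ 0) (hvu : vu ≠ 0)
    (hAs : actR A vs = lam⁻¹ • vs) (hAu : actR A vu = lam • vu) :
    LinearIndependent ℝ ![vs, vu] := by
  have hne : lam⁻¹ ≠ lam := ne_of_lt ((inv_lt_one_of_one_lt₀ hlam).trans hlam)
  apply Module.End.eigenvectors_linearIndependent'
    ((A.map (Int.cast : ℤ → ℝ)).mulVecLin) ![lam⁻¹, lam] ?_ ![vs, vu] ?_
  · intro i j hij
    fin_cases i <;> fin_cases j <;>
      simp only [Matrix.cons_val_zero, Matrix.cons_val_one, Matrix.head_cons,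
        Fin.mk_zero, Fin.mk_one] at hij ⊢
    · exact absurd hij hne
    · exact absurd hij hne.symm
  · intro i
    fin_cases i
    · exact ⟨Module.End.mem_eigenspace_iff.2 (by exact hAs), hvs⟩
    · exact ⟨Module.End.mem_eigenspace_iff.2 (by exact hAu), hvu⟩

set_option maxHeartbeats 4000000
/-- if every positive `𝒳`-rectangle contains a point of `𝒴̃`, then
there exists a negative `𝒴`-rectangle disjoint from `𝒳̃`. -/
theorem statement_4 (A : Matrix (Fin 2) (Fin 2) ℤ) (hdet : A.det = 1) (htr : 2 < A.trace)
    (lam : ℝ) (hlam : 1 < lam) (vs vu : V) (hvs : vs ≠ 0) (hvu : vu ≠ 0)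
    (hAs : actR A vs = lam⁻¹ • vs) (hAu : actR A vu = lam • vu)
    (X Y : Set V) (hXY : Disjoint X Y) (hXne : X.Nonempty) (hYne : Y.Nonempty)
    (hXfin : IsTorusFinite X) (hXinv : IsInvariant A X)
    (hYfin : IsTorusFinite Y) (hYinv : IsInvariant A Y)
    (h : ∀ R : Rect, R.IsPos vs vu X → (R.carrier vs vu ∩ Y).Nonempty) :
    ∃ R : Rect, R.IsNeg vs vu Y ∧ Disjoint (R.carrier vs vu) X := by
  classical
  by_contra hgoal
  push_neg at hgoal
  have hlam0 : (0:ℝ) < lam := one_pos.trans hlam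
  have hlamne : lam ≠ 0 := ne_of_gt hlam0
  have hinv0 : (0:ℝ) < lam⁻¹ := inv_pos.2 hlam0
  have hinv1 : lam⁻¹ < 1 := inv_lt_one_of_one_lt₀ hlam
  obtain ⟨al, be, hrepr, hals, halu, hbes, hbeu⟩ :=
    exists_coords (eigen_indep hlam hvs hvu hAs hAu)
  obtain ⟨FX, hFXfin, hFXeq⟩ := hXfin
  obtain ⟨FY, hFYfin, hFYeq⟩ := hYfin
  have hXYne : ∀ {x y : V}, x ∈ X → y ∈ Y → x ≠ y :=
    fun hx hy he => Set.disjoint_left.1 hXY hx (he ▸ hy)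
  -- coordinates of the action
  have halT : ∀ v, al (actR A v) = lam⁻¹ * al v := by
    intro v
    conv_lhs => rw [hrepr v]
    rw [actR_add, actR_smul, actR_smul, hAs, hAu]
    simp only [map_add, _root_.map_smul, hals, halu, smul_eq_mul]
    ring
  have hbeT : ∀ v, be (actR A v) = lam * be v := by
    intro v
    conv_lhs => rw [hrepr v]
    rw [actR_add, actR_smul, actR_smul, hAs, hAu]
    simp only [map_add, _root_.map_smul, hbes, hbeu, smul_eq_mul]
    ring
  have hTT' : ∀ v, actR A (actR A.adjugate v) = v := by
    intro v
    rw [actR_comp, Matrix.mul_adjugate, hdet, one_smul, actR_one]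
  have hT'T : ∀ v, actR A.adjugate (actR A v) = v := by
    intro v
    rw [actR_comp, Matrix.adjugate_mul, hdet, one_smul, actR_one]
  have halT' : ∀ v, al (actR A.adjugate v) = lam * al v := by
    intro v
    have h1 := halT (actR A.adjugate v)
    rw [hTT'] at h1
    rw [h1, ← mul_assoc, mul_inv_cancel₀ hlamne, one_mul]
  have hbeT' : ∀ v, be (actR A.adjugate v) = lam⁻¹ * be v := by
    intro v
    have h1 := hbeT (actR A.adjugate v)
    rw [hTT'] at h1
    rw [h1, ← mul_assoc, inv_mul_cancel₀ hlamne, one_mul]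
  -- invariance of X and Y
  have hTX : ∀ {x}, x ∈ X → actR A x ∈ X := by
    intro x hx
    conv => rw [← hXinv]
    exact ⟨x, hx, rfl⟩
  have hTY : ∀ {y}, y ∈ Y → actR A y ∈ Y := by
    intro y hy
    conv => rw [← hYinv]
    exact ⟨y, hy, rfl⟩
  have hT'X : ∀ {x}, x ∈ X → actR A.adjugate x ∈ X := by
    intro x hx
    rw [← hXinv] at hx
    obtain ⟨w, hw, rfl⟩ := hx
    rwa [hT'T]
  have hT'Y : ∀ {y}, y ∈ Y → actR A.adjugate y ∈ Y := by
    intro y hy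
    rw [← hYinv] at hy
    obtain ⟨w, hw, rfl⟩ := hy
    rwa [hT'T]
  -- saturation
  have hsatX : ∀ {x m}, x ∈ X → m ∈ lattice → x + m ∈ X := by
    intro x m hx hm
    rw [hFXeq] at hx ⊢
    rw [Set.mem_add] at hx ⊢
    obtain ⟨f, hf, l, hl, rfl⟩ := hx
    exact ⟨f, hf, l + m, lattice_add hl hm, by abel⟩
  have hsatY : ∀ {y m}, y ∈ Y → m ∈ lattice → y + m ∈ Y := by
    intro y m hy hm
    rw [hFYeq] at hy ⊢
    rw [Set.mem_add] at hy ⊢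
    obtain ⟨f, hf, l, hl, rfl⟩ := hy
    exact ⟨f, hf, l + m, lattice_add hl hm, by abel⟩
  -- differences
  have hdiffXY : ∀ {p q}, p ∈ X ∪ Y → q ∈ X ∪ Y →
      p - q ∈ ((FX ∪ FY) + -(FX ∪ FY)) + lattice := by
    have hmem : ∀ {z}, z ∈ X ∪ Y → ∃ f ∈ FX ∪ FY, ∃ l ∈ lattice, f + l = z := by
      intro z hz
      rcases hz with hz | hz
      · rw [hFXeq, Set.mem_add] at hz
        obtain ⟨f, hf, l, hl, he⟩ := hz
        exact ⟨f, Or.inl hf, l, hl, he⟩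
      · rw [hFYeq, Set.mem_add] at hz
        obtain ⟨f, hf, l, hl, he⟩ := hz
        exact ⟨f, Or.inr hf, l, hl, he⟩
    intro p q hp hq
    obtain ⟨f1, hf1, l1, hl1, he1⟩ := hmem hp
    obtain ⟨f2, hf2, l2, hl2, he2⟩ := hmem hq
    rw [Set.mem_add]
    refine ⟨f1 + -f2, Set.mem_add.2 ⟨f1, hf1, -f2, Set.neg_mem_neg.2 hf2, rfl⟩,
      l1 - l2, lattice_sub hl1 hl2, by rw [← he1, ← he2]; abel⟩
  have hdiffY : ∀ {p q}, p ∈ Y → q ∈ Y → p - q ∈ (FY + -FY) + lattice := by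
    intro p q hp hq
    rw [hFYeq, Set.mem_add] at hp hq
    obtain ⟨f1, hf1, l1, hl1, he1⟩ := hp
    obtain ⟨f2, hf2, l2, hl2, he2⟩ := hq
    rw [Set.mem_add]
    refine ⟨f1 + -f2, Set.mem_add.2 ⟨f1, hf1, -f2, Set.neg_mem_neg.2 hf2, rfl⟩,
      l1 - l2, lattice_sub hl1 hl2, by rw [← he1, ← he2]; abel⟩
  -- uniform gap for nonzero differences
  have hgap : ∃ r > 0, ∀ d ∈ ((FX ∪ FY) + -(FX ∪ FY)) + lattice, d ≠ 0 →
      r ≤ max |d 0| |d 1| := by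
    have hGfin : ((FX ∪ FY) + -(FX ∪ FY)).Finite :=
      (hFXfin.union hFYfin).add (hFXfin.union hFYfin).neg
    set D := ((((FX ∪ FY) + -(FX ∪ FY)) + lattice) ∩ {v : V | |v 0| ≤ 1 ∧ |v 1| ≤ 1}) \ {0}
      with hD
    have hDfin : D.Finite := (finite_inter hGfin 1).diff
    rcases Set.eq_empty_or_nonempty D with hemp | hne
    · refine ⟨1, one_pos, fun d hd hd0 => ?_⟩
      by_contra hlt
      push_neg at hlt
      have hdD : d ∈ D := ⟨⟨hd, ((le_max_left _ _).trans_lt hlt).le,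
        ((le_max_right _ _).trans_lt hlt).le⟩, hd0⟩
      rw [hemp] at hdD
      exact hdD
    · obtain ⟨d₀, hd₀D, hmin⟩ := Set.exists_min_image D (fun d => max |d 0| |d 1|) hDfin hne
      have hd₀pos : 0 < max |d₀ 0| |d₀ 1| := by
        obtain ⟨-, hd₀0⟩ := hd₀D
        obtain ⟨i, hi⟩ := Function.ne_iff.1 (show d₀ ≠ 0 from hd₀0)
        have : (0:ℝ) < |d₀ i| := abs_pos.2 hi
        fin_cases i
        · exact this.trans_le (le_max_left _ _)
        · exact this.trans_le (le_max_right _ _)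
      refine ⟨min (max |d₀ 0| |d₀ 1|) 1, lt_min hd₀pos one_pos, fun d hd hd0 => ?_⟩
      rcases le_or_gt (max |d 0| |d 1|) 1 with hle | hgt
      · have hdD : d ∈ D := ⟨⟨hd, (le_max_left _ _).trans hle, (le_max_right _ _).trans hle⟩, hd0⟩
        exact (min_le_left _ _).trans (hmin d hdD)
      · exact (min_le_right _ _).trans hgt.le
  -- separation
  have hsep : ∀ {p q}, p ∈ X ∪ Y → q ∈ X ∪ Y → p ≠ q →
      al (p - q) ≠ 0 ∧ be (p - q) ≠ 0 := by
    obtain ⟨r, hr0, hr⟩ := hgap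
    intro p q hp hq hpq
    have hne0 : p - q ≠ 0 := sub_ne_zero.2 hpq
    have hTXY : ∀ z ∈ X ∪ Y, actR A z ∈ X ∪ Y := by
      rintro z (hz | hz)
      · exact Or.inl (hTX hz)
      · exact Or.inr (hTY hz)
    have hT'XY : ∀ z ∈ X ∪ Y, actR A.adjugate z ∈ X ∪ Y := by
      rintro z (hz | hz)
      · exact Or.inl (hT'X hz)
      · exact Or.inr (hT'Y hz)
    constructor
    · -- al (p - q) ≠ 0
      intro hal0
      have hbe0 : be (p - q) ≠ 0 := by
        intro hbe0
        apply hne0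
        have h1 := hrepr (p - q)
        rw [hal0, hbe0] at h1
        simpa using h1
      set c : ℝ := |be (p - q)| * (|vu 0| + |vu 1|) + 1 with hc
      have hc0 : (0:ℝ) < c := by positivity
      obtain ⟨n, hn⟩ := exists_pow_lt_of_lt_one (div_pos (lt_min hr0 one_pos) hc0) hinv1
      set d : V := (actR A.adjugate)^[n] p - (actR A.adjugate)^[n] q with hd
      have hdmem : d ∈ ((FX ∪ FY) + -(FX ∪ FY)) + lattice :=
        hdiffXY (iter_mem hT'XY n hp) (iter_mem hT'XY n hq)
      have hdval : d = ((lam⁻¹) ^ n * be (p - q)) • vu := by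
        rw [hd, ← iter_sub (actR_sub A.adjugate) n p q]
        have h2 := hrepr ((actR A.adjugate)^[n] (p - q))
        rw [iter_coord halT' n (p - q), iter_coord hbeT' n (p - q), hal0] at h2
        simpa using h2
      have hdne : d ≠ 0 := by
        rw [hdval]
        exact smul_ne_zero (mul_ne_zero (pow_ne_zero _ (ne_of_gt hinv0)) hbe0) hvu
      have hbound : ∀ i : Fin 2, |vu i| ≤ |vu 0| + |vu 1| →
          |d i| ≤ (lam⁻¹) ^ n * (|be (p - q)| * (|vu 0| + |vu 1|)) := by
        intro i hvui
        have he : d i = ((lam⁻¹) ^ n * be (p - q)) * vu i := by rw [hdval]; rfl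
        rw [he, abs_mul, abs_mul, abs_pow, abs_of_pos hinv0]
        calc lam⁻¹ ^ n * |be (p - q)| * |vu i|
            ≤ lam⁻¹ ^ n * |be (p - q)| * (|vu 0| + |vu 1|) :=
              mul_le_mul_of_nonneg_left hvui (by positivity)
          _ = lam⁻¹ ^ n * (|be (p - q)| * (|vu 0| + |vu 1|)) := by ring
      have hsmall : (lam⁻¹) ^ n * (|be (p - q)| * (|vu 0| + |vu 1|)) < min r 1 := by
        have h1 : (lam⁻¹) ^ n * (|be (p - q)| * (|vu 0| + |vu 1|)) ≤ (lam⁻¹) ^ n * c := by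
          have : |be (p - q)| * (|vu 0| + |vu 1|) ≤ c := by rw [hc]; linarith
          exact mul_le_mul_of_nonneg_left this (by positivity)
        have h2 : (lam⁻¹) ^ n * c < min r 1 := by
          have := mul_lt_mul_of_pos_right hn hc0
          rwa [div_mul_cancel₀ _ (ne_of_gt hc0)] at this
        linarith
      have hcon := hr d hdmem hdne
      have h0 := hbound 0 (by linarith [abs_nonneg (vu 1)])
      have h1 := hbound 1 (by linarith [abs_nonneg (vu 0)])
      have : max |d 0| |d 1| < r := max_lt (h0.trans_lt (hsmall.trans_le (min_le_left _ _)))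
        (h1.trans_lt (hsmall.trans_le (min_le_left _ _)))
      linarith
    · -- be (p - q) ≠ 0
      intro hbe0
      have hal0 : al (p - q) ≠ 0 := by
        intro hal0
        apply hne0
        have h1 := hrepr (p - q)
        rw [hal0, hbe0] at h1
        simpa using h1
      set c : ℝ := |al (p - q)| * (|vs 0| + |vs 1|) + 1 with hc
      have hc0 : (0:ℝ) < c := by positivity
      obtain ⟨n, hn⟩ := exists_pow_lt_of_lt_one (div_pos (lt_min hr0 one_pos) hc0) hinv1
      set d : V := (actR A)^[n] p - (actR A)^[n] q with hd
      have hdmem : d ∈ ((FX ∪ FY) + -(FX ∪ FY)) + lattice :=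
        hdiffXY (iter_mem hTXY n hp) (iter_mem hTXY n hq)
      have hdval : d = ((lam⁻¹) ^ n * al (p - q)) • vs := by
        rw [hd, ← iter_sub (actR_sub A) n p q]
        have h2 := hrepr ((actR A)^[n] (p - q))
        rw [iter_coord halT n (p - q), iter_coord hbeT n (p - q), hbe0] at h2
        simpa using h2
      have hdne : d ≠ 0 := by
        rw [hdval]
        exact smul_ne_zero (mul_ne_zero (pow_ne_zero _ (ne_of_gt hinv0)) hal0) hvs
      have hbound : ∀ i : Fin 2, |vs i| ≤ |vs 0| + |vs 1| →
          |d i| ≤ (lam⁻¹) ^ n * (|al (p - q)| * (|vs 0| + |vs 1|)) := by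
        intro i hvsi
        have he : d i = ((lam⁻¹) ^ n * al (p - q)) * vs i := by rw [hdval]; rfl
        rw [he, abs_mul, abs_mul, abs_pow, abs_of_pos hinv0]
        calc lam⁻¹ ^ n * |al (p - q)| * |vs i|
            ≤ lam⁻¹ ^ n * |al (p - q)| * (|vs 0| + |vs 1|) :=
              mul_le_mul_of_nonneg_left hvsi (by positivity)
          _ = lam⁻¹ ^ n * (|al (p - q)| * (|vs 0| + |vs 1|)) := by ring
      have hsmall : (lam⁻¹) ^ n * (|al (p - q)| * (|vs 0| + |vs 1|)) < min r 1 := by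
        have h1 : (lam⁻¹) ^ n * (|al (p - q)| * (|vs 0| + |vs 1|)) ≤ (lam⁻¹) ^ n * c := by
          have : |al (p - q)| * (|vs 0| + |vs 1|) ≤ c := by rw [hc]; linarith
          exact mul_le_mul_of_nonneg_left this (by positivity)
        have h2 : (lam⁻¹) ^ n * c < min r 1 := by
          have := mul_lt_mul_of_pos_right hn hc0
          rwa [div_mul_cancel₀ _ (ne_of_gt hc0)] at this
        linarith
      have hcon := hr d hdmem hdne
      have h0 := hbound 0 (by linarith [abs_nonneg (vs 1)])
      have h1 := hbound 1 (by linarith [abs_nonneg (vs 0)])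
      have : max |d 0| |d 1| < r := max_lt (h0.trans_lt (hsmall.trans_le (min_le_left _ _)))
        (h1.trans_lt (hsmall.trans_le (min_le_left _ _)))
      linarith
  -- component expansion of the coordinate functionals
  have hcompal : ∀ v : V, al v = v 0 * al ![1, 0] + v 1 * al ![0, 1] := by
    intro v
    have hv : v = v 0 • (![1, 0] : V) + v 1 • (![0, 1] : V) := by
      funext i
      fin_cases i <;> simp
    conv_lhs => rw [hv]
    simp only [map_add, _root_.map_smul, smul_eq_mul]
  have hcompbe : ∀ v : V, be v = v 0 * be ![1, 0] + v 1 * be ![0, 1] := by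
    intro v
    have hv : v = v 0 • (![1, 0] : V) + v 1 • (![0, 1] : V) := by
      funext i
      fin_cases i <;> simp
    conv_lhs => rw [hv]
    simp only [map_add, _root_.map_smul, smul_eq_mul]
  -- rounding: lattice points near any vector
  have hround : ∀ w : V, ∃ m ∈ lattice,
      |al m - al w| ≤ |al ![1, 0]| + |al ![0, 1]| ∧
      |be m - be w| ≤ |be ![1, 0]| + |be ![0, 1]| := by
    intro w
    refine ⟨(fun i => ((⌊w i⌋ : ℤ) : ℝ)), ⟨fun i => ⌊w i⌋, rfl⟩, ?_, ?_⟩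
    · rw [← map_sub]
      rw [hcompal ((fun i => ((⌊w i⌋ : ℤ) : ℝ)) - w)]
      have hb : ∀ i : Fin 2, |((fun i => ((⌊w i⌋ : ℤ) : ℝ)) - w) i| ≤ 1 := by
        intro i
        have h1 : ((fun i => ((⌊w i⌋ : ℤ) : ℝ)) - w) i = ((⌊w i⌋ : ℤ) : ℝ) - w i := rfl
        rw [h1, abs_le]
        constructor
        · linarith [Int.sub_one_lt_floor (w i)]
        · linarith [Int.floor_le (w i)]
      calc |((fun i => ((⌊w i⌋ : ℤ) : ℝ)) - w) 0 * al ![1, 0]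
            + ((fun i => ((⌊w i⌋ : ℤ) : ℝ)) - w) 1 * al ![0, 1]|
          ≤ |((fun i => ((⌊w i⌋ : ℤ) : ℝ)) - w) 0| * |al ![1, 0]|
            + |((fun i => ((⌊w i⌋ : ℤ) : ℝ)) - w) 1| * |al ![0, 1]| := by
            refine (abs_add_le _ _).trans ?_
            rw [abs_mul, abs_mul]
        _ ≤ 1 * |al ![1, 0]| + 1 * |al ![0, 1]| := by
            have h0 := hb 0
            have h1 := hb 1
            have := abs_nonneg (al (![1, 0] : V))
            have := abs_nonneg (al (![0, 1] : V))
            nlinarith [abs_nonneg (((fun i => ((⌊w i⌋ : ℤ) : ℝ)) - w) 0),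
              abs_nonneg (((fun i => ((⌊w i⌋ : ℤ) : ℝ)) - w) 1)]
        _ = |al ![1, 0]| + |al ![0, 1]| := by ring
    · rw [← map_sub]
      rw [hcompbe ((fun i => ((⌊w i⌋ : ℤ) : ℝ)) - w)]
      have hb : ∀ i : Fin 2, |((fun i => ((⌊w i⌋ : ℤ) : ℝ)) - w) i| ≤ 1 := by
        intro i
        have h1 : ((fun i => ((⌊w i⌋ : ℤ) : ℝ)) - w) i = ((⌊w i⌋ : ℤ) : ℝ) - w i := rfl
        rw [h1, abs_le]
        constructor
        · linarith [Int.sub_one_lt_floor (w i)]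
        · linarith [Int.floor_le (w i)]
      calc |((fun i => ((⌊w i⌋ : ℤ) : ℝ)) - w) 0 * be ![1, 0]
            + ((fun i => ((⌊w i⌋ : ℤ) : ℝ)) - w) 1 * be ![0, 1]|
          ≤ |((fun i => ((⌊w i⌋ : ℤ) : ℝ)) - w) 0| * |be ![1, 0]|
            + |((fun i => ((⌊w i⌋ : ℤ) : ℝ)) - w) 1| * |be ![0, 1]| := by
            refine (abs_add_le _ _).trans ?_
            rw [abs_mul, abs_mul]
        _ ≤ 1 * |be ![1, 0]| + 1 * |be ![0, 1]| := by
            have h0 := hb 0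
            have h1 := hb 1
            have := abs_nonneg (be (![1, 0] : V))
            have := abs_nonneg (be (![0, 1] : V))
            nlinarith [abs_nonneg (((fun i => ((⌊w i⌋ : ℤ) : ℝ)) - w) 0),
              abs_nonneg (((fun i => ((⌊w i⌋ : ℤ) : ℝ)) - w) 1)]
        _ = |be ![1, 0]| + |be ![0, 1]| := by ring
  -- lattice vectors in the open cones
  have hm_incdec : ∀ sg : ℝ, sg = 1 ∨ sg = -1 → ∃ m ∈ lattice, 0 < sg * al m ∧ 0 < be m := by
    intro sg hsg
    set Ca : ℝ := |al ![1, 0]| + |al ![0, 1]| with hCa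
    set Cb : ℝ := |be ![1, 0]| + |be ![0, 1]| with hCb
    have hCa0 : 0 ≤ Ca := by positivity
    have hCb0 : 0 ≤ Cb := by positivity
    set nn : ℝ := Ca + Cb + 1 with hnn
    obtain ⟨m, hmlat, h1, h2⟩ := hround (nn • (sg • vs + vu))
    have hw1 : al (nn • (sg • vs + vu)) = nn * sg := by
      simp only [_root_.map_smul, map_add, hals, halu, smul_eq_mul]
      ring
    have hw2 : be (nn • (sg • vs + vu)) = nn := by
      simp only [_root_.map_smul, map_add, hbes, hbeu, smul_eq_mul]
      ring
    rw [hw1] at h1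
    rw [hw2] at h2
    refine ⟨m, hmlat, ?_, ?_⟩
    · have ha1 := (abs_le.1 h1).1
      have ha2 := (abs_le.1 h1).2
      rcases hsg with rfl | rfl
      · rw [one_mul]
        rw [mul_one] at ha1 ha2
        linarith [hnn]
      · rw [neg_one_mul]
        rw [mul_neg_one] at ha1 ha2
        linarith [hnn]
    · have hb1 := (abs_le.1 h2).1
      linarith [hnn]
  have hm_dec : ∃ m ∈ lattice, al m < 0 ∧ 0 < be m := by
    obtain ⟨m, hmlat, h1, h2⟩ := hm_incdec (-1) (Or.inr rfl)
    refine ⟨m, hmlat, by linarith [h1], h2⟩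
  have hm_inc : ∃ m ∈ lattice, 0 < al m ∧ 0 < be m := by
    obtain ⟨m, hmlat, h1, h2⟩ := hm_incdec 1 (Or.inl rfl)
    refine ⟨m, hmlat, by linarith [h1], h2⟩
  -- thin lattice vectors
  have hthin : ∀ δ : ℝ, 0 < δ → ∃ m ∈ lattice, 0 < al m ∧ al m < δ ∧ 0 < be m := by
    intro δ hδ
    obtain ⟨m0, hm0lat, hal0, hbe0⟩ := hm_inc
    obtain ⟨n, hn⟩ := exists_pow_lt_of_lt_one (div_pos hδ hal0) hinv1
    refine ⟨(actR A)^[n] m0, iter_mem (fun x hx => lattice_actR A hx) n hm0lat, ?_, ?_, ?_⟩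
    · rw [iter_coord halT]
      exact mul_pos (pow_pos hinv0 n) hal0
    · rw [iter_coord halT]
      have := mul_lt_mul_of_pos_right hn hal0
      rwa [div_mul_cancel₀ _ (ne_of_gt hal0)] at this
    · rw [iter_coord hbeT]
      exact mul_pos (pow_pos hlam0 n) hbe0
  -- H1 : negative Y-rectangles contain X-points with strict relative position
  have hH1 : ∀ y1 y2, y1 ∈ Y → y2 ∈ Y → al y1 < al y2 → be y2 < be y1 →
      ∃ x, x ∈ X ∧ al y1 < al x ∧ al x < al y2 ∧ be y2 < be x ∧ be x < be y1 := by
    intro y1 y2 hy1 hy2 haly hbey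
    have hs0 : (0:ℝ) < al y2 - al y1 := sub_pos.2 haly
    have hu0 : (0:ℝ) < be y1 - be y2 := sub_pos.2 hbey
    have hd : y2 - y1 = (al y2 - al y1) • vs + (-(be y1 - be y2)) • vu := by
      have h0 := hrepr (y2 - y1)
      rw [map_sub, map_sub] at h0
      rw [neg_sub]
      exact h0
    have hneg : Rect.IsNeg vs vu Y ⟨y1 - (be y1 - be y2) • vu, al y2 - al y1,
        be y1 - be y2, hs0, hu0⟩ := by
      constructor
      · show y1 - (be y1 - be y2) • vu + (al y2 - al y1) • vs ∈ Y
        have he : y1 - (be y1 - be y2) • vu + (al y2 - al y1) • vs = y2 := by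
          have h3 : y1 + ((al y2 - al y1) • vs + (-(be y1 - be y2)) • vu) = y1 + (y2 - y1) := by
            rw [← hd]
          calc y1 - (be y1 - be y2) • vu + (al y2 - al y1) • vs
              = y1 + ((al y2 - al y1) • vs + (-(be y1 - be y2)) • vu) := by
                rw [neg_smul]; abel
            _ = y1 + (y2 - y1) := h3
            _ = y2 := by abel
        rw [he]
        exact hy2
      · show y1 - (be y1 - be y2) • vu + (be y1 - be y2) • vu ∈ Y
        have he : y1 - (be y1 - be y2) • vu + (be y1 - be y2) • vu = y1 := by abel
        rw [he]
        exact hy1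
    have hnd := hgoal _ hneg
    rw [Set.not_disjoint_iff] at hnd
    obtain ⟨x, hxcar, hxX⟩ := hnd
    obtain ⟨a, b, ha0, has, hb0, hbu, hxeq⟩ := hxcar
    dsimp only at hxeq has hbu
    have hax : al x = al y1 + a := by
      rw [hxeq]
      simp only [map_add, map_sub, _root_.map_smul, smul_eq_mul, hals, halu]
      ring
    have hbx : be x = be y2 + b := by
      rw [hxeq]
      simp only [map_add, map_sub, _root_.map_smul, smul_eq_mul, hbes, hbeu]
      ring
    obtain ⟨hal1, hbe1⟩ := hsep (Or.inl hxX) (Or.inr hy1) (hXYne hxX hy1)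
    obtain ⟨hal2, hbe2⟩ := hsep (Or.inl hxX) (Or.inr hy2) (hXYne hxX hy2)
    rw [map_sub] at hal1 hbe1 hal2 hbe2
    refine ⟨x, hxX, ?_, ?_, ?_, ?_⟩
    · rcases (sub_ne_zero.1 hal1).lt_or_gt with hlt | hlt
      · exfalso; rw [hax] at hlt; linarith
      · exact hlt
    · rcases (sub_ne_zero.1 hal2).lt_or_gt with hlt | hlt
      · exact hlt
      · exfalso; rw [hax] at hlt; linarith
    · rcases (sub_ne_zero.1 hbe2).lt_or_gt with hlt | hlt
      · exfalso; rw [hbx] at hlt; linarith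
      · exact hlt
    · rcases (sub_ne_zero.1 hbe1).lt_or_gt with hlt | hlt
      · exact hlt
      · exfalso; rw [hbx] at hlt; linarith
  -- H2 : positive X-rectangles contain Y-points with strict relative position
  have hH2 : ∀ x1 x2, x1 ∈ X → x2 ∈ X → al x1 < al x2 → be x1 < be x2 →
      ∃ y, y ∈ Y ∧ al x1 < al y ∧ al y < al x2 ∧ be x1 < be y ∧ be y < be x2 := by
    intro x1 x2 hx1 hx2 halx hbex
    have hs0 : (0:ℝ) < al x2 - al x1 := sub_pos.2 halx
    have hu0 : (0:ℝ) < be x2 - be x1 := sub_pos.2 hbex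
    have hpos : Rect.IsPos vs vu X ⟨x1, al x2 - al x1, be x2 - be x1, hs0, hu0⟩ := by
      constructor
      · exact hx1
      · show x1 + (al x2 - al x1) • vs + (be x2 - be x1) • vu ∈ X
        have hd := hrepr (x2 - x1)
        rw [map_sub, map_sub] at hd
        have he : x1 + (al x2 - al x1) • vs + (be x2 - be x1) • vu = x2 := by
          rw [add_assoc, ← hd]
          abel
        rw [he]
        exact hx2
    obtain ⟨y, hycar, hyY⟩ := h _ hpos
    obtain ⟨a, b, ha0, has, hb0, hbu, hyeq⟩ := hycar
    dsimp only at hyeq has hbu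
    have hay : al y = al x1 + a := by
      rw [hyeq]
      simp only [map_add, _root_.map_smul, smul_eq_mul, hals, halu]
      ring
    have hby : be y = be x1 + b := by
      rw [hyeq]
      simp only [map_add, _root_.map_smul, smul_eq_mul, hbes, hbeu]
      ring
    obtain ⟨hal1, hbe1⟩ := hsep (Or.inr hyY) (Or.inl hx1) (hXYne hx1 hyY).symm
    obtain ⟨hal2, hbe2⟩ := hsep (Or.inr hyY) (Or.inl hx2) (hXYne hx2 hyY).symm
    rw [map_sub] at hal1 hbe1 hal2 hbe2
    refine ⟨y, hyY, ?_, ?_, ?_, ?_⟩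
    · rcases (sub_ne_zero.1 hal1).lt_or_gt with hlt | hlt
      · exfalso; rw [hay] at hlt; linarith
      · exact hlt
    · rcases (sub_ne_zero.1 hal2).lt_or_gt with hlt | hlt
      · exact hlt
      · exfalso; rw [hay] at hlt; linarith
    · rcases (sub_ne_zero.1 hbe1).lt_or_gt with hlt | hlt
      · exfalso; rw [hby] at hlt; linarith
      · exact hlt
    · rcases (sub_ne_zero.1 hbe2).lt_or_gt with hlt | hlt
      · exact hlt
      · exfalso; rw [hby] at hlt; linarith
  -- products are preserved by the action
  have hQT : ∀ n (v : V), al ((actR A)^[n] v) * be ((actR A)^[n] v) = al v * be v := by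
    intro n v
    rw [iter_coord halT, iter_coord hbeT]
    have hcan : (lam⁻¹) ^ n * lam ^ n = 1 := by
      rw [← mul_pow, inv_mul_cancel₀ hlamne, one_pow]
    calc (lam⁻¹) ^ n * al v * (lam ^ n * be v) = ((lam⁻¹) ^ n * lam ^ n) * (al v * be v) := by
          ring
      _ = al v * be v := by rw [hcan, one_mul]
  have hQT' : ∀ n (v : V), al ((actR A.adjugate)^[n] v) * be ((actR A.adjugate)^[n] v)
      = al v * be v := by
    intro n v
    rw [iter_coord halT', iter_coord hbeT']
    have hcan : lam ^ n * (lam⁻¹) ^ n = 1 := by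
      rw [← mul_pow, mul_inv_cancel₀ hlamne, one_pow]
    calc lam ^ n * al v * ((lam⁻¹) ^ n * be v) = (lam ^ n * (lam⁻¹) ^ n) * (al v * be v) := by
          ring
      _ = al v * be v := by rw [hcan, one_mul]
  -- normalization of decreasing Y-pairs
  have hnorm : ∀ y1 y2, y1 ∈ Y → y2 ∈ Y → al (y1 - y2) < 0 → 0 < be (y1 - y2) →
      ∃ z1 z2, z1 ∈ Y ∧ z2 ∈ Y ∧ al (z1 - z2) < 0 ∧ 0 < be (z1 - z2) ∧
        1 ≤ be (z1 - z2) ∧ be (z1 - z2) ≤ lam ∧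
        al (z1 - z2) * be (z1 - z2) = al (y1 - y2) * be (y1 - y2) := by
    intro y1 y2 hy1 hy2 halv hbev
    obtain ⟨k, hk1, hk2⟩ := exists_mem_Ico_zpow hbev hlam
    rcases le_or_gt 0 k with hk | hk
    · set n := k.toNat with hn
      have hkn : lam ^ k = lam ^ n := by
        rw [← zpow_natCast lam n, hn, Int.toNat_of_nonneg hk]
      have hkn1 : lam ^ (k + 1) = lam ^ n * lam := by
        rw [zpow_add_one₀ hlamne, hkn]
      have hw : (actR A.adjugate)^[n] y1 - (actR A.adjugate)^[n] y2
          = (actR A.adjugate)^[n] (y1 - y2) := (iter_sub (actR_sub A.adjugate) n y1 y2).symm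
      have hwal : al ((actR A.adjugate)^[n] (y1 - y2)) = lam ^ n * al (y1 - y2) :=
        iter_coord halT' n (y1 - y2)
      have hwbe : be ((actR A.adjugate)^[n] (y1 - y2)) = (lam⁻¹) ^ n * be (y1 - y2) :=
        iter_coord hbeT' n (y1 - y2)
      have hpown : (0:ℝ) < lam ^ n := pow_pos hlam0 n
      refine ⟨(actR A.adjugate)^[n] y1, (actR A.adjugate)^[n] y2,
        iter_mem (fun z hz => hT'Y hz) n hy1, iter_mem (fun z hz => hT'Y hz) n hy2,
        ?_, ?_, ?_, ?_, ?_⟩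
      · rw [hw, hwal]
        exact mul_neg_of_pos_of_neg hpown halv
      · rw [hw, hwbe]
        exact mul_pos (pow_pos hinv0 n) hbev
      · rw [hw, hwbe, inv_pow, inv_mul_eq_div, le_div_iff₀ hpown, one_mul]
        rw [hkn] at hk1
        exact hk1
      · rw [hw, hwbe, inv_pow, inv_mul_eq_div, div_le_iff₀ hpown]
        rw [hkn1] at hk2
        linarith [hk2.le]
      · rw [hw, hQT']
    · set n := (-k).toNat with hn
      have hkn : lam ^ n * lam ^ k = 1 := by
        rw [← zpow_natCast lam n, hn, Int.toNat_of_nonneg (neg_nonneg.2 hk.le),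
          ← zpow_add₀ hlamne]
        simp
      have hkn1 : lam ^ n * lam ^ (k + 1) = lam := by
        rw [← zpow_natCast lam n, hn, Int.toNat_of_nonneg (neg_nonneg.2 hk.le),
          ← zpow_add₀ hlamne, show -k + (k + 1) = 1 by ring, zpow_one]
      have hw : (actR A)^[n] y1 - (actR A)^[n] y2
          = (actR A)^[n] (y1 - y2) := (iter_sub (actR_sub A) n y1 y2).symm
      have hwal : al ((actR A)^[n] (y1 - y2)) = (lam⁻¹) ^ n * al (y1 - y2) :=
        iter_coord halT n (y1 - y2)
      have hwbe : be ((actR A)^[n] (y1 - y2)) = lam ^ n * be (y1 - y2) :=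
        iter_coord hbeT n (y1 - y2)
      have hpown : (0:ℝ) < lam ^ n := pow_pos hlam0 n
      refine ⟨(actR A)^[n] y1, (actR A)^[n] y2,
        iter_mem (fun z hz => hTY hz) n hy1, iter_mem (fun z hz => hTY hz) n hy2,
        ?_, ?_, ?_, ?_, ?_⟩
      · rw [hw, hwal]
        exact mul_neg_of_pos_of_neg (pow_pos hinv0 n) halv
      · rw [hw, hwbe]
        exact mul_pos hpown hbev
      · rw [hw, hwbe]
        have h1 := mul_le_mul_of_nonneg_left hk1 hpown.le
        rw [hkn] at h1
        exact h1
      · rw [hw, hwbe]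
        have h1 := mul_le_mul_of_nonneg_left hk2.le hpown.le
        rw [hkn1] at h1
        exact h1
      · rw [hw, hQT]
  -- an initial decreasing Y-pair
  obtain ⟨y₀, hy₀⟩ := hYne
  obtain ⟨m₁, hm₁lat, hm₁al, hm₁be⟩ := hm_dec
  have hy₁ : y₀ + m₁ ∈ Y := hsatY hy₀ hm₁lat
  have hm₁eq : (y₀ + m₁) - y₀ = m₁ := by abel
  -- the finite set of candidate (normalized small) products
  have hVfin : ({q : ℝ | ∃ z1 z2, z1 ∈ Y ∧ z2 ∈ Y ∧ al (z1 - z2) < 0 ∧ 0 < be (z1 - z2) ∧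
      1 ≤ be (z1 - z2) ∧ be (z1 - z2) ≤ lam ∧ al m₁ * be m₁ ≤ q ∧
      al (z1 - z2) * be (z1 - z2) = q}).Finite := by
    apply Set.Finite.subset (Set.Finite.image (fun v => al v * be v)
      (finite_inter (hFYfin.add hFYfin.neg)
        (|al m₁ * be m₁| * (|vs 0| + |vs 1|) + lam * (|vu 0| + |vu 1|))))
    rintro q ⟨z1, z2, hz1, hz2, hal, hbe, hbe1, hbelam, hQ₀le, hqeq⟩
    have hQ₀neg : al m₁ * be m₁ < 0 := mul_neg_of_neg_of_pos hm₁al hm₁be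
    have halbound : al m₁ * be m₁ ≤ al (z1 - z2) := by
      have h1 : al (z1 - z2) * be (z1 - z2) ≤ al (z1 - z2) * 1 :=
        mul_le_mul_of_nonpos_left hbe1 hal.le
      rw [mul_one] at h1
      linarith
    have halabs : |al (z1 - z2)| ≤ |al m₁ * be m₁| := by
      rw [abs_le]
      constructor
      · linarith [neg_abs_le (al m₁ * be m₁)]
      · linarith [abs_nonneg (al m₁ * be m₁)]
    have hbeabs : |be (z1 - z2)| ≤ lam := by
      rw [abs_le]
      constructor <;> linarith
    have hco : ∀ i : Fin 2, |vs i| ≤ |vs 0| + |vs 1| → |vu i| ≤ |vu 0| + |vu 1| →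
        |(z1 - z2) i| ≤ |al m₁ * be m₁| * (|vs 0| + |vs 1|) + lam * (|vu 0| + |vu 1|) := by
      intro i hvsi hvui
      have he : (z1 - z2) i = al (z1 - z2) * vs i + be (z1 - z2) * vu i := by
        nth_rewrite 1 [hrepr (z1 - z2)]
        rfl
      rw [he]
      calc |al (z1 - z2) * vs i + be (z1 - z2) * vu i|
          ≤ |al (z1 - z2)| * |vs i| + |be (z1 - z2)| * |vu i| := by
            refine (abs_add_le _ _).trans ?_
            rw [abs_mul, abs_mul]
        _ ≤ |al m₁ * be m₁| * (|vs 0| + |vs 1|) + lam * (|vu 0| + |vu 1|) := by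
            have h1 : |al (z1 - z2)| * |vs i| ≤ |al m₁ * be m₁| * (|vs 0| + |vs 1|) :=
              mul_le_mul halabs hvsi (abs_nonneg _) (abs_nonneg _)
            have h2 : |be (z1 - z2)| * |vu i| ≤ lam * (|vu 0| + |vu 1|) :=
              mul_le_mul hbeabs hvui (abs_nonneg _) hlam0.le
            linarith
    exact ⟨z1 - z2, ⟨hdiffY hz1 hz2,
      hco 0 (by linarith [abs_nonneg (vs 1)]) (by linarith [abs_nonneg (vu 1)]),
      hco 1 (by linarith [abs_nonneg (vs 0)]) (by linarith [abs_nonneg (vu 0)])⟩, hqeq⟩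
  have hVne : ({q : ℝ | ∃ z1 z2, z1 ∈ Y ∧ z2 ∈ Y ∧ al (z1 - z2) < 0 ∧ 0 < be (z1 - z2) ∧
      1 ≤ be (z1 - z2) ∧ be (z1 - z2) ≤ lam ∧ al m₁ * be m₁ ≤ q ∧
      al (z1 - z2) * be (z1 - z2) = q}).Nonempty := by
    obtain ⟨z1, z2, h1, h2, h3, h4, h5, h6, hq⟩ := hnorm (y₀ + m₁) y₀ hy₁ hy₀
      (by rw [hm₁eq]; exact hm₁al) (by rw [hm₁eq]; exact hm₁be)
    rw [hm₁eq] at hq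
    exact ⟨al (z1 - z2) * be (z1 - z2), z1, z2, h1, h2, h3, h4, h5, h6, hq.ge, rfl⟩
  obtain ⟨Qm, hQmV, hQmax⟩ := Set.exists_max_image _ id hVfin hVne
  obtain ⟨yN, yS, hyN, hyS, halNS, hbeNS, hbe1N, hbelamN, hQ₀Qm, hQmeq⟩ := hQmV
  -- global maximality of Qm among decreasing Y-pairs
  have hmax : ∀ z1 z2, z1 ∈ Y → z2 ∈ Y → al (z1 - z2) < 0 → 0 < be (z1 - z2) →
      al (z1 - z2) * be (z1 - z2) ≤ Qm := by
    intro z1 z2 hz1 hz2 ha hb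
    rcases le_or_gt (al m₁ * be m₁) (al (z1 - z2) * be (z1 - z2)) with hge | hlt
    · obtain ⟨w1, w2, h1, h2, h3, h4, h5, h6, hq⟩ := hnorm z1 z2 hz1 hz2 ha hb
      have hmem : al (w1 - w2) * be (w1 - w2) ∈ {q : ℝ | ∃ z1 z2, z1 ∈ Y ∧ z2 ∈ Y ∧
          al (z1 - z2) < 0 ∧ 0 < be (z1 - z2) ∧ 1 ≤ be (z1 - z2) ∧ be (z1 - z2) ≤ lam ∧
          al m₁ * be m₁ ≤ q ∧ al (z1 - z2) * be (z1 - z2) = q} :=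
        ⟨w1, w2, h1, h2, h3, h4, h5, h6, by rw [hq]; exact hge, rfl⟩
      have := hQmax _ hmem
      rw [hq] at this
      exact this
    · exact hlt.le.trans hQ₀Qm
  rw [map_sub] at halNS
  rw [map_sub] at hbeNS
  have ha12 : al yN < al yS := by linarith
  have hb12 : be yS < be yN := by linarith
  -- maximality in coordinate form
  have hmax' : ∀ z1 z2, z1 ∈ Y → z2 ∈ Y → al z1 < al z2 → be z2 < be z1 →
      (al yS - al yN) * (be yN - be yS) ≤ (al z2 - al z1) * (be z1 - be z2) := by
    intro z1 z2 h1 h2 h3 h4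
    have hm := hmax z1 z2 h1 h2 (by rw [map_sub]; linarith) (by rw [map_sub]; linarith)
    have hQm' : Qm = (al yN - al yS) * (be yN - be yS) := by
      rw [← hQmeq, map_sub, map_sub]
    rw [hQm'] at hm
    rw [map_sub, map_sub] at hm
    linarith [hm]
  -- no Y-point strictly inside the minimal box
  have hYout : ∀ y, y ∈ Y → al yN < al y → al y < al yS → be yS < be y → be y < be yN →
      False := by
    intro y hy h1 h2 h3 h4
    have hkey := hmax' yN y hyN hy h1 h4
    have k1 : (0:ℝ) < al y - al yN := by linarith
    have k2 : al y - al yN < al yS - al yN := by linarith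
    have k3 : (0:ℝ) < be yN - be y := by linarith
    have k4 : be yN - be y < be yN - be yS := by linarith
    have := mul_lt_mul'' k2 k4 k1.le k3.le
    linarith
  -- finiteness of coordinate boxes
  have hboxfin : ∀ (F : Set V), F.Finite → ∀ c₁ c₂ d₁ d₂ : ℝ,
      ((F + lattice) ∩ {v : V | c₁ ≤ al v ∧ al v ≤ c₂ ∧ d₁ ≤ be v ∧ be v ≤ d₂}).Finite := by
    intro F hF c₁ c₂ d₁ d₂
    apply (finite_inter hF
      ((|c₁| + |c₂|) * (|vs 0| + |vs 1|) + (|d₁| + |d₂|) * (|vu 0| + |vu 1|))).subset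
    rintro v ⟨hv, h1, h2, h3, h4⟩
    have halabs : |al v| ≤ |c₁| + |c₂| := by
      rw [abs_le]
      constructor
      · linarith [neg_abs_le c₁, abs_nonneg c₂]
      · linarith [le_abs_self c₂, abs_nonneg c₁]
    have hbeabs : |be v| ≤ |d₁| + |d₂| := by
      rw [abs_le]
      constructor
      · linarith [neg_abs_le d₁, abs_nonneg d₂]
      · linarith [le_abs_self d₂, abs_nonneg d₁]
    have hco : ∀ i : Fin 2, |vs i| ≤ |vs 0| + |vs 1| → |vu i| ≤ |vu 0| + |vu 1| →
        |v i| ≤ (|c₁| + |c₂|) * (|vs 0| + |vs 1|) + (|d₁| + |d₂|) * (|vu 0| + |vu 1|) := by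
      intro i hvsi hvui
      have he : v i = al v * vs i + be v * vu i := by
        nth_rewrite 1 [hrepr v]
        rfl
      rw [he]
      calc |al v * vs i + be v * vu i| ≤ |al v| * |vs i| + |be v| * |vu i| := by
            refine (abs_add_le _ _).trans ?_
            rw [abs_mul, abs_mul]
        _ ≤ (|c₁| + |c₂|) * (|vs 0| + |vs 1|) + (|d₁| + |d₂|) * (|vu 0| + |vu 1|) := by
            have hh1 : |al v| * |vs i| ≤ (|c₁| + |c₂|) * (|vs 0| + |vs 1|) :=
              mul_le_mul halabs hvsi (abs_nonneg _) (by positivity)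
            have hh2 : |be v| * |vu i| ≤ (|d₁| + |d₂|) * (|vu 0| + |vu 1|) :=
              mul_le_mul hbeabs hvui (abs_nonneg _) (by positivity)
            linarith
    exact ⟨hv, hco 0 (by linarith [abs_nonneg (vs 1)]) (by linarith [abs_nonneg (vu 1)]),
      hco 1 (by linarith [abs_nonneg (vs 0)]) (by linarith [abs_nonneg (vu 0)])⟩
  -- X-points in the closed minimal box
  have hXinfin : (X ∩ {v : V | al yN ≤ al v ∧ al v ≤ al yS ∧ be yS ≤ be v ∧
      be v ≤ be yN}).Finite := by
    rw [hFXeq]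
    exact hboxfin FX hFXfin _ _ _ _
  have hXinstrict : ∀ x ∈ X ∩ {v : V | al yN ≤ al v ∧ al v ≤ al yS ∧ be yS ≤ be v ∧
      be v ≤ be yN}, al yN < al x ∧ al x < al yS ∧ be yS < be x ∧ be x < be yN := by
    rintro x ⟨hxX, h1, h2, h3, h4⟩
    obtain ⟨han, hbn⟩ := hsep (Or.inl hxX) (Or.inr hyN) (hXYne hxX hyN)
    obtain ⟨has, hbs⟩ := hsep (Or.inl hxX) (Or.inr hyS) (hXYne hxX hyS)
    rw [map_sub] at han hbn has hbs
    refine ⟨?_, ?_, ?_, ?_⟩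
    · exact lt_of_le_of_ne h1 (Ne.symm (sub_ne_zero.1 han))
    · exact lt_of_le_of_ne h2 (sub_ne_zero.1 has)
    · exact lt_of_le_of_ne h3 (Ne.symm (sub_ne_zero.1 hbs))
    · exact lt_of_le_of_ne h4 (sub_ne_zero.1 hbn)
  have hXinne : (X ∩ {v : V | al yN ≤ al v ∧ al v ≤ al yS ∧ be yS ≤ be v ∧
      be v ≤ be yN}).Nonempty := by
    obtain ⟨x, hxX, h1, h2, h3, h4⟩ := hH1 yN yS hyN hyS ha12 hb12
    exact ⟨x, hxX, h1.le, h2.le, h3.le, h4.le⟩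
  obtain ⟨xm, hxmXin, hxmmax⟩ := Set.exists_max_image _ al hXinfin hXinne
  obtain ⟨hx1, hx2, hx3, hx4⟩ := hXinstrict xm hxmXin
  have hxmX : xm ∈ X := hxmXin.1
  -- a thin positive rectangle above xm yields a Y-point just to the right of xm, above yN
  obtain ⟨mt, hmtlat, hmt1, hmt2, hmt3⟩ := hthin (al yS - al xm) (by linarith)
  have hx2m : xm + mt ∈ X := hsatX hxmX hmtlat
  obtain ⟨ys, hysY, hys1, hys2, hys3, hys4⟩ := hH2 xm (xm + mt) hxmX hx2m
    (by rw [map_add]; linarith) (by rw [map_add]; linarith)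
  rw [map_add] at hys2 hys4
  have hysa2 : al ys < al yS := by linarith
  have hysb2 : be yN < be ys := by
    rcases lt_trichotomy (be ys) (be yN) with hlt | heq | hgt
    · exact absurd (hYout ys hysY (by linarith) hysa2 (by linarith) hlt) (fun hf => hf)
    · exfalso
      have hne : ys ≠ yN := by
        intro he
        rw [he] at hys1
        linarith
      have hb := (hsep (Or.inr hysY) (Or.inr hyN) hne).2
      rw [map_sub] at hb
      exact hb (sub_eq_zero.2 heq)
    · exact hgt
  -- the lowest Y-point in the strip right of xm, above yN
  have hCfin : (Y ∩ {v : V | al xm ≤ al v ∧ al v ≤ al yS ∧ be yN ≤ be v ∧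
      be v ≤ be ys}).Finite := by
    rw [hFYeq]
    exact hboxfin FY hFYfin _ _ _ _
  have hCne : (Y ∩ {v : V | al xm ≤ al v ∧ al v ≤ al yS ∧ be yN ≤ be v ∧
      be v ≤ be ys}).Nonempty := ⟨ys, hysY, hys1.le, hysa2.le, hysb2.le, le_refl _⟩
  obtain ⟨yh, hyhC, hyhmin⟩ := Set.exists_min_image _ be hCfin hCne
  obtain ⟨hyhY, hyh1, hyh2, hyh3, hyh4⟩ := hyhC
  have hyhal1 : al xm < al yh := by
    have hb := (hsep (Or.inr hyhY) (Or.inl hxmX) (hXYne hxmX hyhY).symm).1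
    rw [map_sub] at hb
    exact lt_of_le_of_ne hyh1 (Ne.symm (sub_ne_zero.1 hb))
  have hyhal2 : al yh < al yS := by
    have hb := (hsep (Or.inr hyhY) (Or.inr hyS) ?_).1
    · rw [map_sub] at hb
      exact lt_of_le_of_ne hyh2 (sub_ne_zero.1 hb)
    · intro he
      rw [he] at hyh3
      linarith
  have hyhb : be yN < be yh := by
    have hne : yh ≠ yN := by
      intro he
      rw [he] at hyh1
      linarith
    have hb := (hsep (Or.inr hyhY) (Or.inr hyN) hne).2
    rw [map_sub] at hb
    exact lt_of_le_of_ne hyh3 (Ne.symm (sub_ne_zero.1 hb))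
  have hyhminall : ∀ y, y ∈ Y → al xm < al y → al y < al yS → be yN < be y →
      be yh ≤ be y := by
    intro y hy h1 h2 h3
    rcases le_or_gt (be y) (be ys) with hle | hgt
    · exact hyhmin y ⟨hy, h1.le, h2.le, h3.le, hle⟩
    · linarith
  -- apply the contradiction hypothesis to the pair (yh, yS)
  obtain ⟨x', hx'X, hx'1, hx'2, hx'3, hx'4⟩ := hH1 yh yS hyhY hyS hyhal2 (by linarith)
  rcases lt_trichotomy (be x') (be yN) with hxb | hxb | hxb
  · -- x' lands in the closed box, right of xm : contradicts maximality
    have hmem : x' ∈ X ∩ {v : V | al yN ≤ al v ∧ al v ≤ al yS ∧ be yS ≤ be v ∧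
        be v ≤ be yN} := ⟨hx'X, by linarith, hx'2.le, hx'3.le, hxb.le⟩
    have := hxmmax x' hmem
    linarith
  · -- be x' = be yN impossible
    have hb := (hsep (Or.inl hx'X) (Or.inr hyN) (hXYne hx'X hyN)).2
    rw [map_sub] at hb
    exact hb (sub_eq_zero.2 hxb)
  · -- x' is above yN : the pair (xm, x') is an increasing X-pair
    have hxa : al xm < al x' := by linarith
    have hxb2 : be xm < be x' := by linarith
    obtain ⟨yt, hytY, hyt1, hyt2, hyt3, hyt4⟩ := hH2 xm x' hxmX hx'X hxa hxb2
    rcases lt_trichotomy (be yt) (be yN) with hyb | hyb | hyb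
    · exact hYout yt hytY (by linarith) (by linarith) (by linarith) hyb
    · have hne : yt ≠ yN := by
        intro he
        rw [he] at hyt1
        linarith
      have hb := (hsep (Or.inr hytY) (Or.inr hyN) hne).2
      rw [map_sub] at hb
      exact hb (sub_eq_zero.2 hyb)
    · have := hyhminall yt hytY hyt1 (by linarith) hyb
      linarith

end Paper
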